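/- arXiv:2601.07150 — 5 statements merged into one kernel-verified Lean document; each statement's English description precedes it below -/
import Mathlib

section
/- Under the double Bezout identity, the image of the map v ↦ (Mv, Nv) equals the kernel of the map (u,y) ↦ -N̂u + M̂y. That is, I_G = K_G: a pair (u,y) satisfies -N̂u + M̂y = 0 if and only if there exists v with u = Mv and y = Nv. -/
/-- I_G = K_G : the image of v ↦ (Mv, Nv) equals the kernel of (u,y) ↦ -Nhu + Mhy. -/
theorem stmt2 {R : Type*} [CommRing R]
    {U Ys V W : Type*} [AddCommGroup U] [AddCommGroup Ys] [AddCommGroup V] [AddCommGroup W]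
    [Module R U] [Module R Ys] [Module R V] [Module R W]
    (M : V →ₗ[R] U) (N : V →ₗ[R] Ys) (X : U →ₗ[R] V) (Yc : Ys →ₗ[R] V)
    (Mh : Ys →ₗ[R] W) (Nh : U →ₗ[R] W) (Xh : W →ₗ[R] Ys) (Yh : W →ₗ[R] U)
    (h11 : X ∘ₗ M + Yc ∘ₗ N = LinearMap.id)
    (h12 : -(X ∘ₗ Yh) + Yc ∘ₗ Xh = 0)
    (h21 : -(Nh ∘ₗ M) + Mh ∘ₗ N = 0)
    (h22 : Nh ∘ₗ Yh + Mh ∘ₗ Xh = LinearMap.id)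
    (g11 : M ∘ₗ X + Yh ∘ₗ Nh = LinearMap.id)
    (g12 : M ∘ₗ Yc - Yh ∘ₗ Mh = 0)
    (g21 : N ∘ₗ X - Xh ∘ₗ Nh = 0)
    (g22 : N ∘ₗ Yc + Xh ∘ₗ Mh = LinearMap.id) :
    ∀ (u : U) (y : Ys), (-(Nh u) + Mh y = 0) ↔ ∃ v : V, u = M v ∧ y = N v := by
  intro u y
  constructor
  · intro h
    refine ⟨X u + Yc y, ?_, ?_⟩
    · have e1 := LinearMap.congr_fun g11 u
      have e2 := LinearMap.congr_fun g12 y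
      simp only [LinearMap.add_apply, LinearMap.sub_apply, LinearMap.comp_apply,
        LinearMap.id_apply, LinearMap.zero_apply] at e1 e2
      have : Yh (-(Nh u) + Mh y) = 0 := by rw [h]; simp
      simp only [map_add, map_neg] at this
      rw [map_add]
      linear_combination (norm := abel) -e1 - e2 - this
    · have e1 := LinearMap.congr_fun g21 u
      have e2 := LinearMap.congr_fun g22 y
      simp only [LinearMap.add_apply, LinearMap.sub_apply, LinearMap.comp_apply,
        LinearMap.id_apply, LinearMap.zero_apply] at e1 e2
      have : Xh (-(Nh u) + Mh y) = 0 := by rw [h]; simp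
      simp only [map_add, map_neg] at this
      rw [map_add]
      linear_combination (norm := abel) -e1 - e2 + this
  · rintro ⟨v, rfl, rfl⟩
    have := LinearMap.congr_fun h21 v
    simpa using this
end

section
/- Attack representation theorem: under the double Bezout identity, any pair (a_u, −a_y) can be written as (a_u, −a_y) = (M a_{ru}, N a_{ru}) + (−Ŷ a_{ry}, X̂ a_{ry}) with a_{ru} = X a_u − Y a_y and a_{ry} = −N̂ a_u − M̂ a_y, and this decomposition is the identity map applied via the Bezout factors. -/
/-- Attack representation: (a_u, −a_y) decomposes via the Bezout factors with
a_ru = X a_u − Y a_y and a_ry = −Nh a_u − Mh a_y. -/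
theorem stmt8 {R : Type*} [CommRing R]
    {U Ys V W : Type*} [AddCommGroup U] [AddCommGroup Ys] [AddCommGroup V] [AddCommGroup W]
    [Module R U] [Module R Ys] [Module R V] [Module R W]
    (M : V →ₗ[R] U) (N : V →ₗ[R] Ys) (X : U →ₗ[R] V) (Yc : Ys →ₗ[R] V)
    (Mh : Ys →ₗ[R] W) (Nh : U →ₗ[R] W) (Xh : W →ₗ[R] Ys) (Yh : W →ₗ[R] U)
    (h11 : X ∘ₗ M + Yc ∘ₗ N = LinearMap.id)
    (h12 : -(X ∘ₗ Yh) + Yc ∘ₗ Xh = 0)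
    (h21 : -(Nh ∘ₗ M) + Mh ∘ₗ N = 0)
    (h22 : Nh ∘ₗ Yh + Mh ∘ₗ Xh = LinearMap.id)
    (g11 : M ∘ₗ X + Yh ∘ₗ Nh = LinearMap.id)
    (g12 : M ∘ₗ Yc - Yh ∘ₗ Mh = 0)
    (g21 : N ∘ₗ X - Xh ∘ₗ Nh = 0)
    (g22 : N ∘ₗ Yc + Xh ∘ₗ Mh = LinearMap.id) :
    ∀ (a_u : U) (a_y : Ys),
      a_u = M (X a_u - Yc a_y) + -(Yh (-(Nh a_u) - Mh a_y)) ∧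
      -a_y = N (X a_u - Yc a_y) + Xh (-(Nh a_u) - Mh a_y) := by
  intro a_u a_y
  have e11 := congrArg (fun f => f a_u) g11
  have e12 := congrArg (fun f => f a_y) g12
  have e21 := congrArg (fun f => f a_u) g21
  have e22 := congrArg (fun f => f a_y) g22
  simp only [LinearMap.add_apply, LinearMap.sub_apply, LinearMap.comp_apply,
    LinearMap.id_apply, LinearMap.zero_apply] at e11 e12 e21 e22
  constructor <;> [linear_combination (norm := (simp only [map_sub, map_add, map_neg]; abel)) e12 - e11;
    linear_combination (norm := (simp only [map_sub, map_add, map_neg]; abel)) e22 - e21]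
end

section
/- Undetectability characterization (Theorem 4.6): a pair (a_u, −a_y) satisfies −N̂ a_u − M̂ a_y = 0 if and only if there exists ξ with a_u = M ξ and −a_y = N ξ; i.e., attacks are undetectable from the residual −N̂u + M̂y^a exactly when the attack pair lies in the image subspace I_G. -/
/-- Undetectability characterization: −Nh a_u − Mh a_y = 0 iff (a_u, −a_y) lies in the
image subspace I_G. -/
theorem stmt9 {R : Type*} [CommRing R]
    {U Ys V W : Type*} [AddCommGroup U] [AddCommGroup Ys] [AddCommGroup V] [AddCommGroup W]
    [Module R U] [Module R Ys] [Module R V] [Module R W]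
    (M : V →ₗ[R] U) (N : V →ₗ[R] Ys) (X : U →ₗ[R] V) (Yc : Ys →ₗ[R] V)
    (Mh : Ys →ₗ[R] W) (Nh : U →ₗ[R] W) (Xh : W →ₗ[R] Ys) (Yh : W →ₗ[R] U)
    (h11 : X ∘ₗ M + Yc ∘ₗ N = LinearMap.id)
    (h12 : -(X ∘ₗ Yh) + Yc ∘ₗ Xh = 0)
    (h21 : -(Nh ∘ₗ M) + Mh ∘ₗ N = 0)
    (h22 : Nh ∘ₗ Yh + Mh ∘ₗ Xh = LinearMap.id)
    (g11 : M ∘ₗ X + Yh ∘ₗ Nh = LinearMap.id)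
    (g12 : M ∘ₗ Yc - Yh ∘ₗ Mh = 0)
    (g21 : N ∘ₗ X - Xh ∘ₗ Nh = 0)
    (g22 : N ∘ₗ Yc + Xh ∘ₗ Mh = LinearMap.id) :
    ∀ (a_u : U) (a_y : Ys),
      (-(Nh a_u) - Mh a_y = 0) ↔ ∃ ξ : V, a_u = M ξ ∧ -a_y = N ξ := by
  intro a_u a_y
  constructor
  · intro h
    have h' : Nh a_u = -Mh a_y := by linear_combination (norm := abel) -h
    refine ⟨X a_u + Yc (-a_y), ?_, ?_⟩
    · have hg11 := congrArg (fun f => f a_u) g11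
      have hg12 := congrArg (fun f => f a_y) g12
      have h6 := congrArg Yh h'
      simp only [LinearMap.add_apply, LinearMap.sub_apply, LinearMap.comp_apply,
        LinearMap.id_apply, LinearMap.zero_apply, map_neg] at hg11 hg12 h6
      rw [map_add, map_neg, map_neg]
      linear_combination (norm := abel) -hg11 + hg12 + h6
    · have hg21 := congrArg (fun f => f a_u) g21
      have hg22 := congrArg (fun f => f a_y) g22
      have h7 := congrArg Xh h'
      simp only [LinearMap.add_apply, LinearMap.sub_apply, LinearMap.comp_apply,
        LinearMap.id_apply, LinearMap.zero_apply, map_neg] at hg21 hg22 h7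
      rw [map_add, map_neg, map_neg]
      linear_combination (norm := abel) -hg21 + hg22 - h7
  · rintro ⟨ξ, hu, hy⟩
    have ha : a_y = -(N ξ) := by rw [← hy, neg_neg]
    have h21' := congrArg (fun f => f ξ) h21
    simp only [LinearMap.add_apply, LinearMap.neg_apply, LinearMap.comp_apply,
      LinearMap.zero_apply] at h21'
    rw [hu, ha, map_neg]
    linear_combination (norm := abel) h21'
end

section
/- Unactuability characterization (Theorem 4.7): a pair (a_u, −a_y) satisfies X a_u + Y(−a_y) = 0 if and only if there exists r with a_u = −Ŷ r and −a_y = X̂ r; i.e., attacks have no effect on the closed-loop image dynamics exactly when the attack pair lies in the controller image subspace I_K = {(−Ŷr, X̂r)}. -/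
/-- Unactuability characterization: X a_u − Y a_y = 0 iff (a_u, −a_y) lies in the
controller image subspace I_K. -/
theorem stmt10 {R : Type*} [CommRing R]
    {U Ys V W : Type*} [AddCommGroup U] [AddCommGroup Ys] [AddCommGroup V] [AddCommGroup W]
    [Module R U] [Module R Ys] [Module R V] [Module R W]
    (M : V →ₗ[R] U) (N : V →ₗ[R] Ys) (X : U →ₗ[R] V) (Yc : Ys →ₗ[R] V)
    (Mh : Ys →ₗ[R] W) (Nh : U →ₗ[R] W) (Xh : W →ₗ[R] Ys) (Yh : W →ₗ[R] U)
    (h11 : X ∘ₗ M + Yc ∘ₗ N = LinearMap.id)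
    (h12 : -(X ∘ₗ Yh) + Yc ∘ₗ Xh = 0)
    (h21 : -(Nh ∘ₗ M) + Mh ∘ₗ N = 0)
    (h22 : Nh ∘ₗ Yh + Mh ∘ₗ Xh = LinearMap.id)
    (g11 : M ∘ₗ X + Yh ∘ₗ Nh = LinearMap.id)
    (g12 : M ∘ₗ Yc - Yh ∘ₗ Mh = 0)
    (g21 : N ∘ₗ X - Xh ∘ₗ Nh = 0)
    (g22 : N ∘ₗ Yc + Xh ∘ₗ Mh = LinearMap.id) :
    ∀ (a_u : U) (a_y : Ys),
      (X a_u - Yc a_y = 0) ↔ ∃ r : W, a_u = -(Yh r) ∧ -a_y = Xh r := by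
  intro a_u a_y
  constructor
  · intro h
    refine ⟨-(Nh a_u + Mh a_y), ?_, ?_⟩
    · have e1 := LinearMap.ext_iff.mp g11 a_u
      have e2 := LinearMap.ext_iff.mp g12 a_y
      simp only [LinearMap.add_apply, LinearMap.sub_apply, LinearMap.comp_apply,
        LinearMap.id_apply, LinearMap.zero_apply] at e1 e2
      have hM : M (X a_u) = M (Yc a_y) := by rw [sub_eq_zero] at h; rw [h]
      simp only [map_neg, map_add, neg_neg]
      rw [eq_comm, ← sub_eq_zero]
      have : Yh (Nh a_u) + Yh (Mh a_y) - a_u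
          = (M (X a_u) + Yh (Nh a_u)) - a_u + (Yh (Mh a_y) - M (Yc a_y)) + (M (Yc a_y) - M (X a_u)) := by abel
      rw [this, e1, hM]
      rw [sub_eq_zero] at e2
      rw [e2]; abel
    · have e3 := LinearMap.ext_iff.mp g21 a_u
      have e4 := LinearMap.ext_iff.mp g22 a_y
      simp only [LinearMap.add_apply, LinearMap.sub_apply, LinearMap.comp_apply,
        LinearMap.id_apply, LinearMap.zero_apply] at e3 e4
      have hN : N (X a_u) = N (Yc a_y) := by rw [sub_eq_zero] at h; rw [h]
      simp only [map_neg, map_add]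
      rw [sub_eq_zero] at e3
      rw [← e3, hN, ← sub_eq_zero]
      rw [neg_sub_neg, e4]; abel
  · rintro ⟨r, hu, hy⟩
    have e := LinearMap.ext_iff.mp h12 r
    simp only [LinearMap.add_apply, LinearMap.neg_apply, LinearMap.comp_apply,
      LinearMap.zero_apply] at e
    have hy' : a_y = -Xh r := by rw [← hy, neg_neg]
    rw [hu, hy', map_neg, map_neg, sub_neg_eq_add, ← e]
end

section
/- Every actuable attack is detectable on the plant side: if the pair (a_u, −a_y) satisfies X a_u − Y a_y ≠ 0 then writing (a_u, −a_y) = (M, N)ξ₁ + (−Ŷ, X̂)ξ₂ via the Bezout coordinates, one has ξ₁ ≠ 0, and the input residual r_u = X u^a + Y y detects the attack (its value differs from the attack-free value v by exactly ξ₁). -/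
/-- Every actuable attack is detectable on the plant side: if X a_u − Y a_y ≠ 0 then
the first Bezout coordinate ξ₁ of (a_u, −a_y) is nonzero, the decomposition holds,
and the input residual shifts by exactly ξ₁. -/
theorem stmt11 {R : Type*} [CommRing R]
    {U Ys V W : Type*} [AddCommGroup U] [AddCommGroup Ys] [AddCommGroup V] [AddCommGroup W]
    [Module R U] [Module R Ys] [Module R V] [Module R W]
    (M : V →ₗ[R] U) (N : V →ₗ[R] Ys) (X : U →ₗ[R] V) (Yc : Ys →ₗ[R] V)
    (Mh : Ys →ₗ[R] W) (Nh : U →ₗ[R] W) (Xh : W →ₗ[R] Ys) (Yh : W →ₗ[R] U)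
    (h11 : X ∘ₗ M + Yc ∘ₗ N = LinearMap.id)
    (h12 : -(X ∘ₗ Yh) + Yc ∘ₗ Xh = 0)
    (h21 : -(Nh ∘ₗ M) + Mh ∘ₗ N = 0)
    (h22 : Nh ∘ₗ Yh + Mh ∘ₗ Xh = LinearMap.id)
    (g11 : M ∘ₗ X + Yh ∘ₗ Nh = LinearMap.id)
    (g12 : M ∘ₗ Yc - Yh ∘ₗ Mh = 0)
    (g21 : N ∘ₗ X - Xh ∘ₗ Nh = 0)
    (g22 : N ∘ₗ Yc + Xh ∘ₗ Mh = LinearMap.id) :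
    ∀ (a_u : U) (a_y : Ys), X a_u - Yc a_y ≠ 0 →
      (X a_u + Yc (-a_y) ≠ 0 ∧
       a_u = M (X a_u + Yc (-a_y)) + -(Yh (-(Nh a_u) + Mh (-a_y))) ∧
       -a_y = N (X a_u + Yc (-a_y)) + Xh (-(Nh a_u) + Mh (-a_y)) ∧
       ∀ (u : U) (y : Ys),
         X (u + a_u) + Yc (y + -a_y) = (X u + Yc y) + (X a_u + Yc (-a_y))) := by
  intro a_u a_y h
  have G11 := LinearMap.congr_fun g11
  have G12 := LinearMap.congr_fun g12
  have G21 := LinearMap.congr_fun g21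
  have G22 := LinearMap.congr_fun g22
  simp only [LinearMap.add_apply, LinearMap.sub_apply, LinearMap.comp_apply,
    LinearMap.id_apply, LinearMap.zero_apply] at G11 G12 G21 G22
  refine ⟨by simpa [sub_eq_add_neg] using h, ?_, ?_, ?_⟩
  · have h1 := G11 a_u
    have h2 := G12 (-a_y)
    simp only [map_add, map_neg] at *
    linear_combination (norm := module) -h1 - h2
  · have h1 := G21 a_u
    have h2 := G22 (-a_y)
    simp only [map_add, map_neg] at *
    linear_combination (norm := module) -h1 - h2
  · intro u y
    simp only [map_add, map_neg]
    abel
end
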